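/- arXiv:2511.08290 — 2 statements merged into one kernel-verified Lean document; each statement's English description precedes it below -/
import Mathlib

section
/- If x lies in a unique maximal solvable subalgebra M of a finite-dimensional Lie algebra L, then sol_L(x) = M, and in particular sol_L(x) is a subalgebra of L. -/
/-- The solvabilizer of `x` in `L`: elements `y` such that the Lie subalgebra
generated by `x` and `y` is solvable. -/
def solvabilizer (R : Type*) {L : Type*} [CommRing R] [LieRing L] [LieAlgebra R L]
    (x : L) : Set L :=
  {y | LieAlgebra.IsSolvable (LieSubalgebra.lieSpan R L {x, y})}

/-- The solvabilizer of `L`: elements `x` such that for every `h ∈ L` the Lie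
subalgebra generated by `h` and `x` is solvable. -/
def solSet (R L : Type*) [CommRing R] [LieRing L] [LieAlgebra R L] : Set L :=
  {x | ∀ h : L, LieAlgebra.IsSolvable (LieSubalgebra.lieSpan R L {h, x})}

/-- A subalgebra contained in a solvable subalgebra is solvable. -/
lemma solvable_of_le {F L : Type*} [Field F] [LieRing L] [LieAlgebra F L]
    {K N : LieSubalgebra F L} (h : K ≤ N) (hN : LieAlgebra.IsSolvable N) :
    LieAlgebra.IsSolvable K :=
  (LieSubalgebra.inclusion_injective h).lieAlgebra_isSolvable (f := LieSubalgebra.inclusion h)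

/-- Every solvable subalgebra is contained in a maximal solvable subalgebra. -/
lemma exists_le_maximal_solvable {F L : Type*} [Field F] [LieRing L] [LieAlgebra F L]
    [FiniteDimensional F L] (K : LieSubalgebra F L) (hK : LieAlgebra.IsSolvable K) :
    ∃ N, K ≤ N ∧ Maximal (fun N : LieSubalgebra F L => LieAlgebra.IsSolvable N) N := by
  have hwf : WellFounded ((· > ·) : LieSubalgebra F L → LieSubalgebra F L → Prop) :=
    (LieSubalgebra.wellFoundedGT_of_noetherian F L).wf
  obtain ⟨N, hNmem, hNmax⟩ := hwf.has_min
    {N : LieSubalgebra F L | LieAlgebra.IsSolvable N ∧ K ≤ N} ⟨K, hK, le_rfl⟩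
  refine ⟨N, hNmem.2, hNmem.1, fun P hP hNP => ?_⟩
  by_contra h
  exact hNmax P ⟨hP, le_trans hNmem.2 hNP⟩ (lt_of_le_not_ge hNP h)

theorem stmt9 (F L : Type*) [Field F] [LieRing L] [LieAlgebra F L] [FiniteDimensional F L]
    (x : L) (M : LieSubalgebra F L)
    (hM : Maximal (fun N : LieSubalgebra F L => LieAlgebra.IsSolvable N) M) (hxM : x ∈ M)
    (huniq : ∀ N : LieSubalgebra F L,
      Maximal (fun N : LieSubalgebra F L => LieAlgebra.IsSolvable N) N → x ∈ N → N = M) :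
    solvabilizer F x = (M : Set L) := by
  ext y
  constructor
  · intro hy
    obtain ⟨N, hle, hNmax⟩ := exists_le_maximal_solvable _ hy
    have hxN : x ∈ N := hle (LieSubalgebra.subset_lieSpan (by simp))
    have hyN : y ∈ N := hle (LieSubalgebra.subset_lieSpan (by simp))
    rw [huniq N hNmax hxN] at hyN
    exact hyN
  · intro hy
    have hle : LieSubalgebra.lieSpan F L {x, y} ≤ M := by
      rw [LieSubalgebra.lieSpan_le]
      rintro z (rfl | rfl) <;> assumption
    exact solvable_of_le hle hM.1
end

section
/- Let L be a Lie algebra over a field F with solvable radical R. Then sol(L/R) = sol(L)/R: an element x + R lies in sol(L/R) if and only if x ∈ sol(L). -/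
section Aux

open LieAlgebra

variable {R L L₂ : Type*} [CommRing R] [LieRing L] [LieAlgebra R L]
  [LieRing L₂] [LieAlgebra R L₂]

/-- The quotient map by a Lie ideal, as a morphism of Lie algebras. -/
def quotMkHom (I : LieIdeal R L) : L →ₗ⁅R⁆ L ⧸ I :=
  { LieSubmodule.Quotient.mk' I with map_lie' := rfl }

lemma quotMkHom_ker (I : LieIdeal R L) : (quotMkHom I).ker = I := by
  ext x
  rw [LieHom.mem_ker]
  exact LieSubmodule.Quotient.mk_eq_zero I

/-- A Lie algebra is solvable if it has a solvable ideal with solvable quotient. -/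
lemma isSolvable_of_ideal_quot (I : LieIdeal R L) [LieAlgebra.IsSolvable I]
    [LieAlgebra.IsSolvable (L ⧸ I)] : LieAlgebra.IsSolvable L := by
  obtain ⟨k, hk⟩ := LieAlgebra.IsSolvable.solvable R (L ⧸ I)
  obtain ⟨l, hl⟩ := LieAlgebra.IsSolvable.solvable R I
  rw [LieIdeal.derivedSeries_eq_bot_iff] at hl
  have hsurj : Function.Surjective (quotMkHom I) := fun y =>
    LieSubmodule.Quotient.surjective_mk' I y
  have h1 : (derivedSeries R L k).map (quotMkHom I) = ⊥ := by
    rw [LieIdeal.derivedSeries_map_eq k hsurj, hk]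
  rw [LieIdeal.map_eq_bot_iff, quotMkHom_ker] at h1
  refine LieAlgebra.IsSolvable.mk (R := R) (k := l + k) ?_
  rw [derivedSeries_def, derivedSeriesOfIdeal_add, ← derivedSeries_def, eq_bot_iff, ← hl]
  exact derivedSeriesOfIdeal_mono h1 l

lemma map_lieSpan (f : L →ₗ⁅R⁆ L₂) (s : Set L) :
    (LieSubalgebra.lieSpan R L s).map f = LieSubalgebra.lieSpan R L₂ (f '' s) := by
  apply le_antisymm
  · rw [LieSubalgebra.map_le_iff_le_comap, LieSubalgebra.lieSpan_le]
    intro x hx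
    exact LieSubalgebra.subset_lieSpan (Set.mem_image_of_mem f hx)
  · rw [LieSubalgebra.lieSpan_le]
    rintro _ ⟨x, hx, rfl⟩
    exact ⟨x, LieSubalgebra.subset_lieSpan hx, rfl⟩

lemma isSolvable_map (f : L →ₗ⁅R⁆ L₂) (K : LieSubalgebra R L) [LieAlgebra.IsSolvable K] :
    LieAlgebra.IsSolvable (K.map f) := by
  have h : (f.comp K.incl).range = K.map f := by
    ext x
    simp [LieHom.mem_range, LieSubalgebra.mem_map]
  exact h ▸ (f.comp K.incl).isSolvable_range

lemma isSolvable_of_map_quot (I : LieIdeal R L) [LieAlgebra.IsSolvable I] (K : LieSubalgebra R L)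
    (h : LieAlgebra.IsSolvable (K.map (quotMkHom I))) : LieAlgebra.IsSolvable K := by
  let g : K →ₗ⁅R⁆ L ⧸ I := (quotMkHom I).comp K.incl
  have hker : LieAlgebra.IsSolvable g.ker := by
    let j : g.ker →ₗ⁅R⁆ I :=
      { toFun := fun y => ⟨((y : K) : L), by
          have h0 : g (y : K) = 0 := (LieHom.mem_ker).mp y.2
          exact (LieSubmodule.Quotient.mk_eq_zero I).mp h0⟩
        map_add' := fun y z => rfl
        map_smul' := fun t y => rfl
        map_lie' := rfl }
    have hinj : Function.Injective j := by
      intro a b hab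
      have h1 : ((a : K) : L) = ((b : K) : L) := congrArg (fun y : I => (y : L)) hab
      exact Subtype.ext (Subtype.ext h1)
    exact hinj.lieAlgebra_isSolvable
  have hrange : g.range = K.map (quotMkHom I) := by
    ext x
    simp [g, LieHom.mem_range, LieSubalgebra.mem_map]
  have hq : LieAlgebra.IsSolvable g.range := hrange ▸ h
  have hquot : LieAlgebra.IsSolvable (K ⧸ g.ker) :=
    (solvable_iff_equiv_solvable g.quotKerEquivRange).mpr hq
  exact isSolvable_of_ideal_quot g.ker

end Aux

theorem stmt18 (F L : Type*) [Field F] [LieRing L] [LieAlgebra F L] [FiniteDimensional F L] :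
    (∀ x : L,
      (LieSubmodule.Quotient.mk' (LieAlgebra.radical F L)) x ∈
          solSet F (L ⧸ LieAlgebra.radical F L) ↔ x ∈ solSet F L) ∧
    solSet F (L ⧸ LieAlgebra.radical F L) =
      (LieSubmodule.Quotient.mk' (LieAlgebra.radical F L)) '' solSet F L := by
  set I : LieIdeal F L := LieAlgebra.radical F L with hI
  have key : ∀ x : L, (quotMkHom I) x ∈ solSet F (L ⧸ I) ↔ x ∈ solSet F L := by
    intro x
    constructor
    · intro hx h
      have hsol := hx (quotMkHom I h)
      apply isSolvable_of_map_quot I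
      rw [map_lieSpan, Set.image_pair]
      exact hsol
    · intro hx hbar
      obtain ⟨h, rfl⟩ := LieSubmodule.Quotient.surjective_mk' I hbar
      have : LieAlgebra.IsSolvable (LieSubalgebra.lieSpan F L {h, x}) := hx h
      have hm := isSolvable_map (quotMkHom I) (LieSubalgebra.lieSpan F L {h, x})
      rw [map_lieSpan, Set.image_pair] at hm
      exact hm
  refine ⟨key, ?_⟩
  ext z
  constructor
  · intro hz
    obtain ⟨x, rfl⟩ := LieSubmodule.Quotient.surjective_mk' I z
    exact ⟨x, (key x).mp hz, rfl⟩
  · rintro ⟨x, hx, rfl⟩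
    exact (key x).mpr hx
end
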